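/- Every root of the permanental polynomial of any tree is purely imaginary; more precisely, if T is a tree with adjacency eigenvalues λ_1,…,λ_n, then the roots of π(T,x) are iλ_1,…,iλ_n. -/

import Mathlib

open Polynomial

/-- The permanental polynomial of a simple graph `G`:
`π(G, x) = per(x I − A(G))`, computed over `ℂ[X]`. -/
noncomputable def permPoly {V : Type*} [Fintype V] [DecidableEq V]
    (G : SimpleGraph V) : Polynomial ℂ :=
  letI := Classical.decRel G.Adj
  Matrix.permanent ((X : Polynomial ℂ) • (1 : Matrix V V (Polynomial ℂ))
      - (SimpleGraph.adjMatrix (Polynomial ℂ) G))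

section Aux

open Equiv

variable {V : Type*} [Fintype V] [DecidableEq V]

set_option linter.unusedSectionVars false

lemma iter_succ' (σ : Equiv.Perm V) (m : ℕ) (i : V) :
    σ ((⇑σ)^[m] i) = (⇑σ)^[m+1] i := (Function.iterate_succ_apply' σ m i).symm

/-- A walk along the orbit of a permutation whose moved points step along edges. -/
lemma orbit_walk (T : SimpleGraph V) (σ : Equiv.Perm V)
    (hadj : ∀ j, σ j ≠ j → T.Adj j (σ j)) (i : V) (hi : σ i ≠ i) :
    ∀ m : ℕ, ∃ w : T.Walk i (σ^[m] i), w.length = m ∧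
      w.support = (List.range (m + 1)).map (fun j => σ^[j] i) := by
  intro m
  induction m with
  | zero => exact ⟨SimpleGraph.Walk.nil, rfl, rfl⟩
  | succ m ih =>
    obtain ⟨w, hl, hs⟩ := ih
    have hmv : σ (σ^[m] i) ≠ σ^[m] i := by
      intro h
      rw [iter_succ', Function.iterate_succ_apply] at h
      exact hi ((σ.injective.iterate m) h)
    have hadj' : T.Adj (σ^[m] i) (σ^[m+1] i) := by
      rw [← iter_succ']
      exact hadj _ hmv
    refine ⟨w.concat hadj', ?_, ?_⟩
    · rw [SimpleGraph.Walk.length_concat, hl]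
    · rw [SimpleGraph.Walk.support_concat, hs]
      rw [show m + 1 + 1 = (m+1) + 1 from rfl, List.range_succ (n := m+1)]
      simp

lemma sq_eq_one_of_adj (T : SimpleGraph V) (hT : T.IsAcyclic) (σ : Equiv.Perm V)
    (hadj : ∀ j, σ j ≠ j → T.Adj j (σ j)) : ∀ i, σ (σ i) = i := by
  intro i
  by_contra h2
  have hi : σ i ≠ i := fun h => h2 (by rw [h, h])
  have hex : ∃ k, 0 < k ∧ σ^[k] i = i := by
    refine ⟨orderOf σ, orderOf_pos σ, ?_⟩
    rw [Equiv.Perm.iterate_eq_pow, pow_orderOf_eq_one]; rfl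
  classical
  let k := Nat.find hex
  have hk : 0 < k ∧ σ^[k] i = i := Nat.find_spec hex
  have hkmin : ∀ j, j < k → ¬(0 < j ∧ σ^[j] i = i) := fun j hj => Nat.find_min hex hj
  have hk1 : k ≠ 1 := by
    intro h
    exact hi (by simpa [h] using hk.2)
  have hk2 : k ≠ 2 := by
    intro h
    apply h2
    have := hk.2
    rw [h] at this
    simpa [Function.iterate_succ_apply'] using this
  have hk3 : 3 ≤ k := by
    rcases hk with ⟨hpos, -⟩; omega
  have hinj : ∀ a < k, ∀ b < k, σ^[a] i = σ^[b] i → a = b := by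
    have key : ∀ a b, a < b → b < k → σ^[a] i ≠ σ^[b] i := by
      intro a b hab hbk heq
      have : σ^[a] (σ^[b - a] i) = σ^[a] i := by
        rw [← Function.iterate_add_apply]
        rw [show a + (b - a) = b by omega]
        exact heq.symm
      have h3 : σ^[b - a] i = i := (σ.injective.iterate a) this
      exact hkmin (b - a) (by omega) ⟨by omega, h3⟩
    intro a ha b hb heq
    rcases lt_trichotomy a b with h | h | h
    · exact absurd heq (key a b h hb)
    · exact h
    · exact absurd heq.symm (key b a h ha)
  obtain ⟨w, hwl, hws⟩ := orbit_walk T σ hadj i hi (k - 1)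
  have hnodup : w.support.Nodup := by
    rw [hws]
    refine List.Nodup.map_on ?_ List.nodup_range
    intro a ha b hb heq
    rw [List.mem_range] at ha hb
    exact hinj a (by omega) b (by omega) heq
  have hpath : w.IsPath := SimpleGraph.Walk.IsPath.mk' hnodup
  have hlast : T.Adj (σ^[k-1] i) i := by
    have hmv : σ (σ^[k-1] i) ≠ σ^[k-1] i := by
      intro h
      rw [iter_succ', show k - 1 + 1 = k by omega, hk.2] at h
      exact hkmin (k-1) (by omega) ⟨by omega, h.symm⟩
    have h4 := hadj _ hmv
    rwa [iter_succ', show k - 1 + 1 = k by omega, hk.2] at h4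
  have hpu := SimpleGraph.isAcyclic_iff_path_unique.mp hT
    (SimpleGraph.Path.singleton hlast) (SimpleGraph.Path.reverse ⟨w, hpath⟩)
  have hlen : (SimpleGraph.Path.singleton hlast).val.length =
      (SimpleGraph.Path.reverse ⟨w, hpath⟩).val.length := by rw [hpu]
  simp [SimpleGraph.Path.singleton, SimpleGraph.Path.reverse, hwl] at hlen
  omega

lemma involution_sign_card (σ : Equiv.Perm V) (hσ : ∀ i, σ (σ i) = i) :
    ∃ m : ℕ, σ.support.card = 2 * m ∧ Equiv.Perm.sign σ = (-1) ^ m := by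
  have hord : orderOf σ ∣ 2 := by
    apply orderOf_dvd_of_pow_eq_one
    ext x
    simp [pow_succ, hσ x]
  have hall : ∀ a ∈ σ.cycleType, a = 2 := by
    intro a ha
    have h2 : 2 ≤ a := Equiv.Perm.two_le_of_mem_cycleType ha
    have hdvd : a ∣ orderOf σ := by
      rw [← Equiv.Perm.lcm_cycleType]
      exact Multiset.dvd_lcm ha
    have h3 := (hdvd.trans hord)
    have := Nat.le_of_dvd (by norm_num) h3
    omega
  refine ⟨Multiset.card σ.cycleType, ?_, ?_⟩
  · rw [← Equiv.Perm.sum_cycleType]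
    rw [Multiset.eq_replicate_card.mpr hall, Multiset.sum_replicate, smul_eq_mul,
      Multiset.card_replicate]
    ring
  · rw [Equiv.Perm.sign_of_cycleType]
    conv_lhs => rw [Multiset.eq_replicate_card.mpr hall]
    rw [Multiset.sum_replicate, smul_eq_mul, Multiset.card_replicate]
    rw [show Multiset.card σ.cycleType * 2 + Multiset.card σ.cycleType
        = 2 * Multiset.card σ.cycleType + Multiset.card σ.cycleType by ring]
    rw [pow_add, pow_mul]
    norm_num

lemma permPoly_eq_tree (T : SimpleGraph V) [DecidableRel T.Adj] (hT : T.IsAcyclic) :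
    permPoly T = C (Complex.I ^ Fintype.card V) *
      aeval (C (-Complex.I) * X : ℂ[X]) (T.adjMatrix ℂ).charpoly := by
  have h0 : permPoly T = Matrix.permanent
      ((X : ℂ[X]) • (1 : Matrix V V ℂ[X]) - T.adjMatrix (ℂ[X])) := by
    unfold permPoly
    congr!
  rw [h0, Matrix.permanent, Matrix.charpoly, Matrix.det_apply', map_sum, Finset.mul_sum]
  apply Finset.sum_congr rfl
  intro σ _
  set t : ℂ[X] := C (-Complex.I) * X with ht
  by_cases hσ : ∀ i, σ i ≠ i → T.Adj (σ i) i
  · -- contributing case : σ is an involution along edges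
    have hσ' : ∀ j, σ j ≠ j → T.Adj j (σ j) := fun j hj => (hσ j hj).symm
    have hsq := sq_eq_one_of_adj T hT σ hσ'
    obtain ⟨m, hcard, hsign⟩ := involution_sign_card σ hsq
    set s := σ.support with hs
    set f := sᶜ.card with hf
    have hn : Fintype.card V = 2 * m + f := by
      rw [← Finset.card_add_card_compl s, hcard]
    -- LHS
    have hL : (∏ i, ((X : ℂ[X]) • (1 : Matrix V V ℂ[X]) - T.adjMatrix (ℂ[X])) (σ i) i)
        = X ^ f := by
      rw [← Finset.prod_mul_prod_compl s]
      have h1 : ∀ i ∈ s, ((X : ℂ[X]) • (1 : Matrix V V ℂ[X]) - T.adjMatrix (ℂ[X])) (σ i) i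
          = -1 := by
        intro i hi
        have hne : σ i ≠ i := Equiv.Perm.mem_support.mp hi
        simp [Matrix.sub_apply, Matrix.smul_apply, Matrix.one_apply_ne hne,
          SimpleGraph.adjMatrix_apply, hσ i hne]
      have h2 : ∀ i ∈ sᶜ, ((X : ℂ[X]) • (1 : Matrix V V ℂ[X]) - T.adjMatrix (ℂ[X])) (σ i) i
          = X := by
        intro i hi
        have heq : σ i = i := Equiv.Perm.notMem_support.mp
          (by simpa [hs] using Finset.mem_compl.mp hi)
        simp [heq, Matrix.sub_apply, Matrix.smul_apply, Matrix.one_apply,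
          SimpleGraph.adjMatrix_apply]
      rw [Finset.prod_congr rfl h1, Finset.prod_congr rfl h2]
      rw [Finset.prod_const, Finset.prod_const, hcard, ← hf]
      simp [pow_mul]
    rw [hL]
    -- RHS
    rw [map_mul]
    have hε : (aeval t) ((Equiv.Perm.sign σ : ℤ) : ℂ[X]) = ((-1 : ℂ[X])) ^ m := by
      rw [map_intCast, hsign]
      push_cast
      simp
    rw [hε, map_prod]
    have hR : (∏ i, (aeval t) ((Matrix.charmatrix (T.adjMatrix ℂ)) (σ i) i)) = t ^ f := by
      rw [← Finset.prod_mul_prod_compl s]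
      have h1 : ∀ i ∈ s, (aeval t) ((Matrix.charmatrix (T.adjMatrix ℂ)) (σ i) i) = -1 := by
        intro i hi
        have hne : σ i ≠ i := Equiv.Perm.mem_support.mp hi
        rw [Matrix.charmatrix_apply_ne _ _ _ hne]
        simp [SimpleGraph.adjMatrix_apply, hσ i hne]
      have h2 : ∀ i ∈ sᶜ, (aeval t) ((Matrix.charmatrix (T.adjMatrix ℂ)) (σ i) i) = t := by
        intro i hi
        have heq : σ i = i := Equiv.Perm.notMem_support.mp
          (by simpa [hs] using Finset.mem_compl.mp hi)
        rw [heq, Matrix.charmatrix_apply_eq]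
        simp [SimpleGraph.adjMatrix_apply]
      rw [Finset.prod_congr rfl h1, Finset.prod_congr rfl h2]
      rw [Finset.prod_const, Finset.prod_const, hcard, ← hf]
      simp [pow_mul]
    rw [hR, ht, mul_pow, ← C_pow, hn]
    rw [show ((-1 : ℂ[X])) ^ m = C ((-1 : ℂ) ^ m) by rw [map_pow, map_neg, map_one]]
    rw [← mul_assoc, ← mul_assoc, ← C_mul, ← C_mul]
    have hc : Complex.I ^ (2 * m + f) * (-1 : ℂ) ^ m * (-Complex.I) ^ f = 1 := by
      have h1 : Complex.I ^ (2 * m + f) * (-1 : ℂ) ^ m * (-Complex.I) ^ f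
          = ((Complex.I ^ 2) * -1) ^ m * (Complex.I * -Complex.I) ^ f := by ring
      rw [h1, Complex.I_sq]
      norm_num [Complex.I_mul_I]
    rw [hc, map_one, one_mul]
  · -- vanishing case
    push_neg at hσ
    obtain ⟨i, hne, hnadj⟩ := hσ
    have hL : (∏ i, ((X : ℂ[X]) • (1 : Matrix V V ℂ[X]) - T.adjMatrix (ℂ[X])) (σ i) i)
        = 0 := by
      apply Finset.prod_eq_zero (Finset.mem_univ i)
      simp [Matrix.sub_apply, Matrix.smul_apply, Matrix.one_apply_ne hne,
        SimpleGraph.adjMatrix_apply, hnadj]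
    have hR : (∏ i, (Matrix.charmatrix (T.adjMatrix ℂ)) (σ i) i) = 0 := by
      apply Finset.prod_eq_zero (Finset.mem_univ i)
      rw [Matrix.charmatrix_apply_ne _ _ _ hne]
      simp [SimpleGraph.adjMatrix_apply, hnadj]
    rw [hL, hR, mul_zero, map_zero, mul_zero]

end Aux

/-- For a tree `T` whose adjacency eigenvalues are `λ_1, …, λ_n`, the roots of
the permanental polynomial of `T` are exactly `iλ_1, …, iλ_n`. -/
theorem tree_perSpectrum_purely_imaginary
    {V : Type*} [Fintype V] [DecidableEq V] (T : SimpleGraph V)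
    [DecidableRel T.Adj] (hT : T.IsTree) :
    (permPoly T).roots =
      ((T.adjMatrix ℂ).charpoly.roots).map (fun l => Complex.I * l) := by
  classical
  rw [permPoly_eq_tree T hT.IsAcyclic]
  set φ := (T.adjMatrix ℂ).charpoly with hφ
  have hmo : φ.Monic := Matrix.charpoly_monic _
  have hsp : φ.Splits := IsAlgClosed.splits φ
  have hdeg : φ.natDegree = Fintype.card V := Matrix.charpoly_natDegree_eq_dim _
  have hcardroots : Multiset.card φ.roots = Fintype.card V := by
    rw [← hdeg]; exact splits_iff_card_roots.mp hsp
  have hprod : φ = (φ.roots.map fun a => X - C a).prod :=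
    hsp.eq_prod_roots_of_monic hmo
  have h1 : aeval (C (-Complex.I) * X : ℂ[X]) φ
      = (φ.roots.map fun a => (C (-Complex.I) * X - C a)).prod := by
    conv_lhs => rw [hprod]
    rw [map_multiset_prod, Multiset.map_map]
    apply congrArg
    apply Multiset.map_congr rfl
    intro a _
    simp [Function.comp, algebraMap_eq]
  rw [h1]
  have h2 : (C (Complex.I ^ Fintype.card V) : ℂ[X])
      = (φ.roots.map fun _ => (C Complex.I : ℂ[X])).prod := by
    rw [Multiset.map_const', Multiset.prod_replicate, hcardroots, ← C_pow]
  rw [h2, ← Multiset.prod_map_mul]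
  have h3 : (φ.roots.map fun a => (C Complex.I : ℂ[X]) * (C (-Complex.I) * X - C a)).prod
      = ((φ.roots.map fun l => Complex.I * l).map fun b => X - C b).prod := by
    rw [Multiset.map_map]
    apply congrArg
    apply Multiset.map_congr rfl
    intro a _
    simp only [Function.comp]
    rw [mul_sub, ← mul_assoc, ← C_mul, ← C_mul, mul_neg, Complex.I_mul_I, neg_neg,
      map_one, one_mul]
  rw [h3, roots_multiset_prod_X_sub_C]
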